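/- Let (μ, W) be a matrix weight and let Γ : ℕ → M_N(ℂ) be a sequence of positive definite matrices such that every T ∈ 𝒜 satisfies T Γ_n = Γ_n T* for all n ∈ ℕ. Suppose there is a nonempty subset I ⊆ ℕ such that 𝒜^Γ_I = { T ∈ M_N(ℂ) : T Γ_n = Γ_n T* for all n ∈ I } is *-invariant, i.e., T ∈ 𝒜^Γ_I implies T* ∈ 𝒜^Γ_I. Then 𝒜 = A_h: for every T ∈ M_N(ℂ), T W(x) = W(x) T* for μ-almost every x if and only if T = T* and T W(x) = W(x) T for μ-almost every x. -/

import Mathlib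

open Matrix MeasureTheory ComplexOrder

lemma aux_zero' {N : ℕ} (G A : Matrix (Fin N) (Fin N) ℂ) (hG : G.PosDef)
    (hA : Aᴴ = A) (hAG : A * G = -(G * A)) : A = 0 := by
  have h1 : (A * G * A).trace = -((G * (A * A)).trace) := by
    rw [hAG]; simp [mul_assoc]
  have h2 : (A * G * A).trace = (G * (A * A)).trace := by
    rw [mul_assoc, trace_mul_comm, mul_assoc]
  have ht : (A * G * A).trace = 0 := by
    rw [h2] at h1 ⊢; linear_combination h1 / 2
  have hP : (A * G * Aᴴ).PosSemidef := hG.posSemidef.mul_mul_conjTranspose_same A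
  rw [hA] at hP
  have hdiag : ∀ i, (A * G * A) i i =
      star (fun k => star (A i k)) ⬝ᵥ G *ᵥ (fun k => star (A i k)) := by
    intro i
    simp only [dotProduct, mulVec, mul_apply, Finset.sum_mul, Finset.mul_sum,
      Pi.star_apply, star_star]
    rw [Finset.sum_comm]
    refine Finset.sum_congr rfl fun k _ => Finset.sum_congr rfl fun l _ => ?_
    have : star (A i l) = A l i := by
      calc star (A i l) = Aᴴ l i := by rw [conjTranspose_apply]
        _ = A l i := by rw [hA]
    rw [this]; ring
  have hnn : ∀ i, 0 ≤ (A * G * A) i i := by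
    intro i
    exact hP.diag_nonneg
  have hzero : ∀ i, (A * G * A) i i = 0 := by
    intro i
    have hsum : ∑ j, (A * G * A) j j = 0 := ht
    exact (Finset.sum_eq_zero_iff_of_nonneg (fun j _ => hnn j)).mp hsum i (Finset.mem_univ i)
  ext i k
  by_contra hne
  have hv : (fun k => star (A i k)) ≠ 0 := by
    intro h0
    exact hne (by simpa using congrFun h0 k)
  have := hG.dotProduct_mulVec_pos hv
  rw [← hdiag i, hzero i] at this
  exact lt_irrefl 0 this

/-- Let `(μ, W)` be a matrix weight and `Γ` a sequence of positive definite matrices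
such that `T Γₙ = Γₙ Tᴴ` for every `T ∈ 𝒜` and every `n`. If for some nonempty
`I ⊆ ℕ` the set `𝒜^Γ_I = {T : T Γₙ = Γₙ Tᴴ ∀ n ∈ I}` is `*`-invariant, then
`𝒜 = A_h`. -/
theorem A_eq_Ah_of_starInvariant_AGamma (N : ℕ) (hN : 1 ≤ N)
    (μ : Measure ℝ) [SigmaFinite μ]
    (W : ℝ → Matrix (Fin N) (Fin N) ℂ)
    (hWmeas : ∀ i j, Measurable fun x => W x i j)
    (hWpos : ∀ᵐ x ∂μ, (W x).PosDef)
    (Γ : ℕ → Matrix (Fin N) (Fin N) ℂ)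
    (hΓpos : ∀ n, (Γ n).PosDef)
    (hΓ : ∀ T : Matrix (Fin N) (Fin N) ℂ,
      (∀ᵐ x ∂μ, T * W x = W x * Tᴴ) → ∀ n, T * Γ n = Γ n * Tᴴ)
    (I : Set ℕ) (hI : I.Nonempty)
    (hstar : ∀ T : Matrix (Fin N) (Fin N) ℂ,
      (∀ n ∈ I, T * Γ n = Γ n * Tᴴ) → (∀ n ∈ I, Tᴴ * Γ n = Γ n * T)) :
    ∀ T : Matrix (Fin N) (Fin N) ℂ,
      (∀ᵐ x ∂μ, T * W x = W x * Tᴴ) ↔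
        (T = Tᴴ ∧ ∀ᵐ x ∂μ, T * W x = W x * T) := by
  intro T
  constructor
  · intro h
    obtain ⟨n₀, hn₀⟩ := hI
    have hTΓ : ∀ n, T * Γ n = Γ n * Tᴴ := hΓ T h
    have hTHΓ : Tᴴ * Γ n₀ = Γ n₀ * T := hstar T (fun n _ => hTΓ n) n₀ hn₀
    set G := Γ n₀ with hGdef
    set A : Matrix (Fin N) (Fin N) ℂ := Complex.I • (T - Tᴴ) with hAdef
    have hAherm : Aᴴ = A := by
      rw [hAdef, conjTranspose_smul, conjTranspose_sub, conjTranspose_conjTranspose]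
      rw [show star Complex.I = -Complex.I from Complex.conj_I]
      rw [neg_smul, ← smul_neg, neg_sub]
    have hAG : A * G = -(G * A) := by
      rw [hAdef, smul_mul_assoc, mul_smul_comm, ← smul_neg]
      congr 1
      rw [sub_mul, mul_sub, hTΓ n₀, hTHΓ]
      abel
    have hA0 : A = 0 := aux_zero' G A (hΓpos n₀) hAherm hAG
    have hTT : T = Tᴴ := by
      have := hA0
      rw [hAdef, smul_eq_zero] at this
      rcases this with h' | h'
      · exact absurd h' Complex.I_ne_zero
      · exact sub_eq_zero.mp h'
    exact ⟨hTT, by filter_upwards [h] with x hx; rw [hx, ← hTT]⟩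
  · rintro ⟨hTT, h⟩
    filter_upwards [h] with x hx
    rw [hx, ← hTT]
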